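/- Let $U$ be an $m$-dimensional $\mathbb{F}_q$-subspace of $\mathbb{F}_{q^n}^t$ such that $\dim_{\mathbb{F}_{q^n}} \langle U \rangle_{\mathbb{F}_{q^n}} = m$. If $f \in \mathbb{F}_{q^n}[x_0, \ldots, x_{t-1}]$ is a homogeneous polynomial of degree $d \leq q$ that vanishes at every vector of $U$, then $f$ vanishes at every vector of $\langle U \rangle_{\mathbb{F}_{q^n}}$. -/

import Mathlib

open MvPolynomial

universe u

lemma aux_K {K : Type u} [Field K] [Fintype K] {k : ℕ} (p : MvPolynomial (Fin k) K)
    (h : ∀ v : Fin k → K, eval v p = 0)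
    (hp : ∀ s ∈ p.support, ∀ i, s i ≤ Fintype.card K - 1) : p = 0 := by
  classical
  let e : ULift.{u} (Fin k) ≃ Fin k := Equiv.ulift
  let q : MvPolynomial (ULift.{u} (Fin k)) K := rename e.symm p
  have hq : q = 0 := by
    apply MvPolynomial.eq_zero_of_eval_eq_zero (ULift.{u} (Fin k)) K
    · intro v
      rw [eval_rename]
      exact h _
    · rw [MvPolynomial.mem_restrictDegree]
      intro s hs j
      rw [MvPolynomial.support_rename_of_injective e.symm.injective] at hs
      obtain ⟨s', hs', rfl⟩ := Finset.mem_image.mp hs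
      have : j = e.symm (e j) := by simp
      rw [this, Finsupp.mapDomain_apply e.symm.injective]
      exact hp s' hs' (e j)
  have : rename e.symm p = rename e.symm 0 := by simpa [q] using hq
  exact rename_injective _ e.symm.injective this


lemma aux_vanish {K L : Type*} [Field K] [Field L] [Algebra K L] [Fintype K] [Finite L]
    {k : ℕ} (g : MvPolynomial (Fin k) L)
    (hdeg : ∀ s ∈ g.support, ∀ i, s i ≤ Fintype.card K - 1)
    (hvan : ∀ x : Fin k → K, eval (fun i => algebraMap K L (x i)) g = 0) :
    g = 0 := by
  classical
  haveI : Module.Finite K L := Module.finite_iff_finite.mpr inferInstance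
  set ι := Fin (Module.finrank K L) with hι
  let bL : Module.Basis ι K L := Module.finBasis K L
  -- component polynomials over K
  let gc : ι → MvPolynomial (Fin k) K := fun j =>
    ∑ s ∈ g.support, monomial s (bL.repr (coeff s g) j)
  have hrepr : ∀ (j : ι) (s : Fin k →₀ ℕ), coeff s (gc j) = bL.repr (coeff s g) j := by
    intro j s
    rw [MvPolynomial.coeff_sum]
    by_cases hs : s ∈ g.support
    · rw [Finset.sum_eq_single s (fun b _ hb => by rw [coeff_monomial, if_neg hb])
        (fun h => absurd hs h)]
      rw [coeff_monomial, if_pos rfl]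
    · rw [Finset.sum_eq_zero, MvPolynomial.notMem_support_iff.mp hs, map_zero]
      · rfl
      · intro b hb
        rw [coeff_monomial, if_neg]
        rintro rfl; exact hs hb
  -- evaluation decomposition
  have key : ∀ x : Fin k → K,
      ∑ j, (eval x (gc j)) • bL j = eval (fun i => algebraMap K L (x i)) g := by
    intro x
    have hev : ∀ j, eval x (gc j)
        = ∑ s ∈ g.support, bL.repr (coeff s g) j * (s.prod fun i e => x i ^ e) := by
      intro j
      rw [map_sum]
      exact Finset.sum_congr rfl fun s _ => eval_monomial
    simp_rw [hev, Finset.sum_smul]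
    rw [Finset.sum_comm]
    have hgev : eval (fun i => algebraMap K L (x i)) g
        = ∑ s ∈ g.support, coeff s g * algebraMap K L (s.prod fun i e => x i ^ e) := by
      conv_lhs => rw [g.as_sum, map_sum]
      refine Finset.sum_congr rfl fun s _ => ?_
      rw [eval_monomial, map_finsuppProd]
      simp [map_pow]
    rw [hgev]
    refine Finset.sum_congr rfl fun s _ => ?_
    have : ∀ j, (bL.repr (coeff s g) j * (s.prod fun i e => x i ^ e)) • bL j
        = (s.prod fun i e => x i ^ e) • (bL.repr (coeff s g) j • bL j) := by
      intro j; rw [mul_comm, mul_smul]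
    simp_rw [this, ← Finset.smul_sum, bL.sum_repr]
    rw [Algebra.smul_def, mul_comm]
  -- each component vanishes on K-points
  have hcvan : ∀ (j : ι) (x : Fin k → K), eval x (gc j) = 0 := by
    intro j x
    have h0 : ∑ j, (eval x (gc j)) • bL j = 0 := by rw [key, hvan]
    exact Fintype.linearIndependent_iff.mp bL.linearIndependent _ h0 j
  have hczero : ∀ j, gc j = 0 := by
    intro j
    apply aux_K _ (hcvan j)
    intro s hs i
    apply hdeg s _ i
    by_contra hns
    rw [MvPolynomial.mem_support_iff, hrepr, MvPolynomial.notMem_support_iff.mp hns,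
      map_zero] at hs
    exact hs rfl
  ext s
  have : bL.repr (coeff s g) = 0 := by
    ext j
    rw [← hrepr, hczero, coeff_zero]; rfl
  have := (LinearEquiv.map_eq_zero_iff bL.repr).mp this
  simp [this]

lemma degree_single {k : ℕ} (i : Fin k) (a : ℕ) : (Finsupp.single i a).degree = a := by
  rcases eq_or_ne a 0 with rfl | ha
  · simp [Finsupp.degree]
  · simp [Finsupp.degree_apply, Finsupp.support_single_ne_zero _ ha]

lemma aux_homog {K L : Type*} [Field K] [Field L] [Algebra K L] [Fintype K] [Finite L]
    {k d : ℕ} (hd : d ≤ Fintype.card K)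
    (g : MvPolynomial (Fin k) L) (hg : g.IsHomogeneous d)
    (hvan : ∀ x : Fin k → K, eval (fun i => algebraMap K L (x i)) g = 0) :
    g = 0 := by
  classical
  set q := Fintype.card K with hq
  have hq2 : 2 ≤ q := Fintype.one_lt_card
  set c : Fin k → L := fun i => coeff (Finsupp.single i q) g with hc
  set g' : MvPolynomial (Fin k) L := g - ∑ i, C (c i) * (X i ^ q - X i) with hg'
  -- coefficient formula for the correction term
  have hcor : ∀ s : Fin k →₀ ℕ,
      coeff s (∑ i, C (c i) * ((X i : MvPolynomial (Fin k) L) ^ q - X i))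
      = ∑ i, c i * ((if Finsupp.single i q = s then 1 else 0)
          - (if Finsupp.single i 1 = s then 1 else 0)) := by
    intro s
    rw [MvPolynomial.coeff_sum]
    refine Finset.sum_congr rfl fun i _ => ?_
    simp [coeff_X_pow, coeff_X', mul_sub]
  -- single i q ≠ single i' 1
  have hsingle_ne : ∀ (i i' : Fin k), Finsupp.single i q ≠ Finsupp.single i' 1 := by
    intro i i' h
    have := congrArg Finsupp.degree h
    rw [degree_single, degree_single] at this
    omega
  have hvan' : ∀ x : Fin k → K, eval (fun i => algebraMap K L (x i)) g' = 0 := by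
    intro x
    have hx : ∀ i : Fin k, (algebraMap K L (x i)) ^ q = algebraMap K L (x i) := by
      intro i; rw [← map_pow, FiniteField.pow_card]
    rw [hg', map_sub, hvan x, map_sum]
    simp [hx]
  have hdeg : ∀ s ∈ g'.support, ∀ i, s i ≤ q - 1 := by
    intro s hs i
    by_contra hle
    push_neg at hle
    have hqs : q ≤ s i := by omega
    apply MvPolynomial.mem_support_iff.mp hs
    rw [hg', coeff_sub, hcor]
    by_cases hcase : ∃ i₀, s = Finsupp.single i₀ q
    · obtain ⟨i₀, rfl⟩ := hcase
      have h1 : coeff (Finsupp.single i₀ q) g = c i₀ := rfl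
      rw [h1, Finset.sum_eq_single i₀]
      · rw [if_pos rfl, if_neg (fun h => hsingle_ne i₀ i₀ h.symm)]
        ring
      · intro b _ hb
        rw [if_neg (fun h => hb (Finsupp.single_left_injective (by omega : q ≠ 0) h)),
          if_neg (fun h => hsingle_ne i₀ b h.symm)]
        ring
      · intro h; exact absurd (Finset.mem_univ i₀) h
    · push_neg at hcase
      have h1 : coeff s g = 0 := by
        apply hg.coeff_eq_zero
        intro hdeg
        have h2 : s i ≤ Finsupp.degree s := Finsupp.le_degree i s
        have hsi : s i = q := by omega
        -- show s = single i q, contradiction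
        apply hcase i
        ext j
        rcases eq_or_ne j i with rfl | hj
        · simp [hsi]
        · rw [Finsupp.single_apply, if_neg (Ne.symm hj)]
          by_contra hsj
          have hjs : j ∈ s.support := Finsupp.mem_support_iff.mpr hsj
          have his : i ∈ s.support := Finsupp.mem_support_iff.mpr (by omega)
          have hsub : ({i, j} : Finset (Fin k)) ⊆ s.support := by
            intro a ha
            simp only [Finset.mem_insert, Finset.mem_singleton] at ha
            rcases ha with rfl | rfl <;> assumption
          have := Finset.sum_le_sum_of_subset hsub (f := fun a => s a)
          rw [Finset.sum_pair hj.symm] at this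
          have : s i + s j ≤ Finsupp.degree s := this
          omega
      rw [h1, Finset.sum_eq_zero]
      · ring
      · intro b _
        rw [if_neg (fun h => hcase b h.symm), if_neg]
        · ring
        · intro h
          have h3 : s i ≤ 1 := by
            rw [← h, Finsupp.single_apply]
            split <;> omega
          omega
  have hg'0 : g' = 0 := aux_vanish g' hdeg hvan'
  have hgeq : g = ∑ i, C (c i) * ((X i : MvPolynomial (Fin k) L) ^ q - X i) := by
    have := sub_eq_zero.mp hg'0
    exact this
  have hc0 : ∀ i, c i = 0 := by
    intro i
    by_cases h1 : d = 1
    · rw [hc]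
      apply hg.coeff_eq_zero
      rw [degree_single]; omega
    · have h2 : coeff (Finsupp.single i 1) g = 0 := by
        apply hg.coeff_eq_zero
        rw [degree_single]
        -- d ≠ 1: if coeff nonzero need degree=d; but also from hc case d=q≥2... just need 1 ≠ d
        omega
      rw [hgeq, hcor, Finset.sum_eq_single i] at h2
      · rw [if_neg (hsingle_ne i i), if_pos rfl] at h2
        simpa using h2
      · intro b _ hb
        rw [if_neg (hsingle_ne b i), if_neg]
        · ring
        · intro h
          exact hb (Finsupp.single_left_injective one_ne_zero h)
      · intro h; exact absurd (Finset.mem_univ i) h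
  rw [hgeq, Finset.sum_eq_zero]
  intro i _
  rw [hc0 i]
  simp

theorem stmt_3 (q n t m d : ℕ) (K L : Type*) [Field K] [Field L] [Algebra K L]
    [Fintype K] [Fintype L] (hK : Fintype.card K = q) (hL : Fintype.card L = q ^ n)
    (U : Submodule K (Fin t → L)) (hU : Module.finrank K U = m)
    (hspan : Module.finrank L (Submodule.span L (U : Set (Fin t → L))) = m)
    (f : MvPolynomial (Fin t) L) (hf : f.IsHomogeneous d) (hd : d ≤ q)
    (hvan : ∀ u ∈ U, MvPolynomial.eval u f = 0) :
    ∀ w ∈ Submodule.span L (U : Set (Fin t → L)), MvPolynomial.eval w f = 0 := by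
  classical
  intro w hw
  rw [Submodule.mem_span_set'] at hw
  obtain ⟨k, cf, vv, rfl⟩ := hw
  set v : Fin k → (Fin t → L) := fun i => (vv i : Fin t → L) with hv
  have hvU : ∀ i, v i ∈ U := fun i => (vv i).2
  set σp : Fin t → MvPolynomial (Fin k) L := fun j => ∑ i, C (v i j) * X i with hσp
  set g : MvPolynomial (Fin k) L := eval₂ C σp f with hgdef
  -- general evaluation formula
  have hcomp : ∀ (y : Fin k → L), eval y g = eval (fun j => ∑ i, v i j * y i) f := by
    intro y
    rw [hgdef, eval_eval₂]
    have hid : (eval y).comp (C : L →+* MvPolynomial (Fin k) L) = RingHom.id L :=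
      RingHom.ext fun a => eval_C a
    rw [hid, eval₂_id]
    have hpt : (fun s => eval y (σp s)) = fun j => ∑ i, v i j * y i := by
      funext j
      rw [hσp]
      simp [map_sum]
    rw [hpt]
  -- homogeneity
  have hgh : g.IsHomogeneous d := by
    have h1 : ∀ j, (σp j).IsHomogeneous 1 := by
      intro j
      exact IsHomogeneous.sum _ _ _ fun i _ => isHomogeneous_C_mul_X _ _
    have := hf.eval₂ (C : L →+* MvPolynomial (Fin k) L) σp
      (fun r => isHomogeneous_C _ _) h1
    simpa using this
  -- vanishing at K-points
  have hgvan : ∀ x : Fin k → K, eval (fun i => algebraMap K L (x i)) g = 0 := by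
    intro x
    rw [hcomp]
    have hpt : (fun j => ∑ i, v i j * algebraMap K L (x i))
        = ((∑ i, x i • v i : Fin t → L)) := by
      funext j
      rw [Finset.sum_apply]
      refine Finset.sum_congr rfl fun i _ => ?_
      rw [Pi.smul_apply, Algebra.smul_def, mul_comm]
    rw [hpt]
    exact hvan _ (Submodule.sum_mem _ fun i _ => Submodule.smul_mem _ _ (hvU i))
  have hg0 : g = 0 := aux_homog (hK ▸ hd) g hgh hgvan
  have := hcomp cf
  rw [hg0, map_zero] at this
  have hpt2 : (fun j => ∑ i, v i j * cf i) = ((∑ i, cf i • v i : Fin t → L)) := by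
    funext j
    rw [Finset.sum_apply]
    refine Finset.sum_congr rfl fun i _ => ?_
    rw [Pi.smul_apply, smul_eq_mul, mul_comm]
  rw [hpt2] at this
  exact this.symm
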